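/- Let φ(t) = t log₂^{1/2}(2/t) on (0,1]. The Orlicz space L_N on [0,1] with N(u) = exp(u²) − 1 coincides with the Marcinkiewicz space M(φ) whose norm is ‖x‖ = sup_{0<t≤1} φ(t)^{-1} ∫_0^t x*(s) ds, with equivalent norms. -/

import Mathlib

open MeasureTheory
open scoped ENNReal
open Set Filter Real

/-- Lebesgue measure on `[0,1]`. -/
noncomputable def unitMeasure : Measure ℝ := volume.restrict (Set.Icc 0 1)

/-- The nonincreasing rearrangement of `|x|` on `[0,1]`. -/
noncomputable def decRearr (x : ℝ → ℝ) (s : ℝ) : ℝ :=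
  sInf {τ : ℝ | 0 ≤ τ ∧ unitMeasure {t | τ < |x t|} ≤ ENNReal.ofReal s}

/-- The Luxemburg norm of the Orlicz space `L_N` on `[0,1]`, `N(u) = exp(u²) - 1`. -/
noncomputable def luxemburgN (z : ℝ → ℝ) : ℝ≥0∞ :=
  ⨅ (u : ℝ) (_ : 0 < u ∧
    (∫⁻ t in Set.Icc (0:ℝ) 1, ENNReal.ofReal (Real.exp ((z t / u) ^ 2) - 1)) ≤ 1),
    ENNReal.ofReal u

/-- The function `φ(t) = t log₂^{1/2}(2/t)`. -/
noncomputable def phi (t : ℝ) : ℝ := t * Real.sqrt (Real.logb 2 (2 / t))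

/-- The Marcinkiewicz norm `‖x‖_{M(φ)} = sup_{0 < t ≤ 1} φ(t)⁻¹ ∫_0^t x*(s) ds`. -/
noncomputable def marcinkiewiczNorm (x : ℝ → ℝ) : ℝ≥0∞ :=
  ⨆ (t : ℝ) (_ : t ∈ Set.Ioc (0:ℝ) 1),
    (ENNReal.ofReal (phi t))⁻¹ * ∫⁻ s in Set.Ioc (0:ℝ) t, ENNReal.ofReal (decRearr x s)


lemma unitMeasure_le_one (A : Set ℝ) : unitMeasure A ≤ 1 := by
  calc unitMeasure A ≤ unitMeasure Set.univ := measure_mono (Set.subset_univ A)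
    _ = 1 := by
      rw [unitMeasure, Measure.restrict_apply_univ, Real.volume_Icc]
      norm_num

lemma rearr_set_nonempty {x : ℝ → ℝ} (hx : Measurable x) {s : ℝ} (hs : 0 < s) :
    {τ : ℝ | 0 ≤ τ ∧ unitMeasure {t | τ < |x t|} ≤ ENNReal.ofReal s}.Nonempty := by
  have hmeas : ∀ c : ℝ, MeasurableSet {t : ℝ | c < |x t|} :=
    fun c => measurableSet_lt measurable_const hx.abs
  have hter : Tendsto (fun n : ℕ => unitMeasure {t | (n : ℝ) < |x t|}) atTop
      (nhds (unitMeasure (⋂ n : ℕ, {t | (n : ℝ) < |x t|}))) := by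
    apply tendsto_measure_iInter_atTop (fun n => (hmeas _).nullMeasurableSet)
    · intro a b hab z hz
      simp only [Set.mem_setOf_eq] at hz ⊢
      exact lt_of_le_of_lt (by exact_mod_cast hab : (a:ℝ) ≤ (b:ℝ)) hz
    · exact ⟨0, lt_of_le_of_lt (unitMeasure_le_one _) (by norm_num) |>.ne⟩
  have hempty : (⋂ n : ℕ, {t : ℝ | (n : ℝ) < |x t|}) = ∅ := by
    ext z
    simp only [Set.mem_iInter, Set.mem_setOf_eq, Set.mem_empty_iff_false, iff_false, not_forall,
      not_lt]
    obtain ⟨n, hn⟩ := exists_nat_ge |x z|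
    exact ⟨n, hn⟩
  rw [hempty, measure_empty] at hter
  have : ∀ᶠ n : ℕ in atTop, unitMeasure {t | (n : ℝ) < |x t|} < ENNReal.ofReal s :=
    hter.eventually_lt_const (by simp [ENNReal.ofReal_pos, hs])
  obtain ⟨n, hn⟩ := this.exists
  exact ⟨n, ⟨Nat.cast_nonneg n, hn.le⟩⟩

lemma decRearr_nonneg (x : ℝ → ℝ) (s : ℝ) : 0 ≤ decRearr x s :=
  Real.sInf_nonneg fun τ hτ => hτ.1

lemma decRearr_antitone {x : ℝ → ℝ} (hx : Measurable x) {s t : ℝ} (hs : 0 < s) (hst : s ≤ t) :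
    decRearr x t ≤ decRearr x s := by
  apply csInf_le_csInf ⟨0, fun τ hτ => hτ.1⟩ (rearr_set_nonempty hx hs)
  exact fun τ hτ => ⟨hτ.1, le_trans hτ.2 (ENNReal.ofReal_le_ofReal hst)⟩

-- if decRearr x t < τ then unitMeasure {τ < |x|} ≤ ofReal t
lemma meas_le_of_decRearr_lt {x : ℝ → ℝ} (hx : Measurable x) {t τ : ℝ} (ht : 0 < t)
    (h : decRearr x t < τ) : unitMeasure {z | τ < |x z|} ≤ ENNReal.ofReal t := by
  obtain ⟨τ', hτ'mem, hτ'lt⟩ := exists_lt_of_csInf_lt (rearr_set_nonempty hx ht) h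
  exact le_trans (measure_mono fun z hz => lt_trans hτ'lt hz) hτ'mem.2

lemma lintegral_Ioc_zero_le {f : ℝ → ℝ≥0∞} (hf : Measurable f) {t : ℝ} (ht : 0 < t)
    {B : ℝ≥0∞} (h : ∀ ε, 0 < ε → ε ≤ t → ∫⁻ s in Set.Ioc ε t, f s ≤ B) :
    ∫⁻ s in Set.Ioc 0 t, f s ≤ B := by
  have hU : Set.Ioc 0 t = ⋃ n : ℕ, Set.Ioc (t / (n + 1)) t := by
    ext s
    simp only [Set.mem_iUnion, Set.mem_Ioc]
    constructor
    · rintro ⟨hs0, hst⟩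
      obtain ⟨n, hn⟩ := exists_nat_gt (t / s)
      refine ⟨n, ⟨?_, hst⟩⟩
      rw [div_lt_iff₀ (by positivity)]
      calc t = (t / s) * s := by field_simp
        _ < n * s := by exact mul_lt_mul_of_pos_right hn hs0
        _ ≤ s * (n + 1) := by nlinarith
    · rintro ⟨n, hn1, hn2⟩
      exact ⟨lt_trans (by positivity) hn1, hn2⟩
  have hmono : Monotone (fun n : ℕ => (Set.Ioc (t / (n + 1)) t).indicator f) := by
    intro a b hab
    apply Set.indicator_le_indicator_of_subset
    · apply Set.Ioc_subset_Ioc_left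
      apply div_le_div_of_nonneg_left ht.le (by positivity)
      exact_mod_cast by exact_mod_cast add_le_add_left (Nat.cast_le.2 hab) 1
    · intro z; exact zero_le
  have hind : ∀ z, (Set.Ioc (0:ℝ) t).indicator f z = ⨆ n : ℕ, (Set.Ioc (t / (n + 1)) t).indicator f z := by
    intro z
    rcases em (z ∈ Set.Ioc (0:ℝ) t) with hz | hz
    · rw [Set.indicator_of_mem hz]
      rw [hU] at hz
      obtain ⟨n, hn⟩ := Set.mem_iUnion.1 hz
      apply le_antisymm
      · exact le_iSup_of_le n (by rw [Set.indicator_of_mem hn])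
      · exact iSup_le fun m => Set.indicator_le_self _ _ _
    · rw [Set.indicator_of_notMem hz]
      rw [hU] at hz
      simp only [Set.mem_iUnion, not_exists] at hz
      simp [Set.indicator_of_notMem (hz _)]
  calc ∫⁻ s in Set.Ioc 0 t, f s = ∫⁻ s, (Set.Ioc (0:ℝ) t).indicator f s := by
        rw [lintegral_indicator measurableSet_Ioc]
    _ = ∫⁻ s, ⨆ n : ℕ, (Set.Ioc (t / (n + 1)) t).indicator f s := by
        exact lintegral_congr hind
    _ = ⨆ n : ℕ, ∫⁻ s, (Set.Ioc (t / (n + 1)) t).indicator f s := by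
        exact lintegral_iSup (fun n => hf.indicator measurableSet_Ioc) hmono
    _ ≤ B := by
        apply iSup_le
        intro n
        rw [lintegral_indicator measurableSet_Ioc]
        exact h _ (by positivity) (by
          rw [div_le_iff₀ (by positivity)]
          nlinarith [ht.le, Nat.cast_nonneg (α := ℝ) n])

lemma log_lintegral_bound {t : ℝ} (ht0 : 0 < t) (ht1 : t ≤ 1) :
    ∫⁻ s in Set.Ioc 0 t, ENNReal.ofReal (Real.log (2 / s))
      ≤ ENNReal.ofReal (t * Real.log (2 / t) + t) := by
  have hmeas : Measurable fun s : ℝ => ENNReal.ofReal (Real.log (2 / s)) :=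
    ENNReal.measurable_ofReal.comp (Real.measurable_log.comp (measurable_const.div measurable_id))
  apply lintegral_Ioc_zero_le hmeas ht0
  intro ε hε hεt
  set F : ℝ → ℝ := fun s => s * (Real.log 2 - Real.log s) + s with hF
  have hderiv : ∀ z ∈ Set.uIcc ε t, HasDerivAt F (Real.log (2 / z)) z := by
    intro z hz
    rw [Set.uIcc_of_le hεt] at hz
    have hz0 : 0 < z := lt_of_lt_of_le hε hz.1
    have h1 : HasDerivAt (fun s : ℝ => s * (Real.log 2 - Real.log s))
        (1 * (Real.log 2 - Real.log z) + z * (0 - z⁻¹)) z :=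
      (hasDerivAt_id z).mul ((hasDerivAt_const z (Real.log 2)).sub (Real.hasDerivAt_log hz0.ne'))
    have h2 : HasDerivAt F (1 * (Real.log 2 - Real.log z) + z * (0 - z⁻¹) + 1) z := h1.add (hasDerivAt_id z)
    convert h2 using 1
    rw [Real.log_div (by norm_num) hz0.ne']
    field_simp
    ring
  have hcont : ContinuousOn (fun s : ℝ => Real.log (2 / s)) (Set.uIcc ε t) := by
    rw [Set.uIcc_of_le hεt]
    apply ContinuousOn.log
    · exact continuousOn_const.div continuousOn_id fun z hz => (lt_of_lt_of_le hε hz.1).ne'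
    · intro z hz
      have hz0 : 0 < z := lt_of_lt_of_le hε hz.1
      positivity
  have hint : IntervalIntegrable (fun s : ℝ => Real.log (2 / s)) volume ε t := by
    rw [Set.uIcc_of_le hεt] at hcont
    exact (hcont.mono (by rw [Set.uIcc_of_le hεt])).intervalIntegrable
  have hftc := intervalIntegral.integral_eq_sub_of_hasDerivAt hderiv hint
  rw [intervalIntegral.integral_of_le hεt] at hftc
  have hnn : 0 ≤ᵐ[volume.restrict (Set.Ioc ε t)] fun s : ℝ => Real.log (2 / s) := by
    show ∀ᵐ z ∂volume.restrict (Set.Ioc ε t), 0 ≤ Real.log (2 / z)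
    rw [ae_restrict_iff' measurableSet_Ioc]
    refine ae_of_all _ fun z hz => ?_
    have hz0 : 0 < z := lt_of_lt_of_le hε hz.1.le
    apply Real.log_nonneg
    rw [le_div_iff₀ hz0]
    nlinarith [hz.2, ht1]
  rw [← ofReal_integral_eq_lintegral_ofReal hint.1 hnn, hftc]
  apply ENNReal.ofReal_le_ofReal
  have hFε : 0 ≤ F ε := by
    have : Real.log ε ≤ 0 := Real.log_nonpos hε.le (le_trans hεt ht1)
    have h2 : 0 < Real.log 2 := Real.log_pos (by norm_num)
    simp only [hF]
    nlinarith
  have hFt : F t = t * Real.log (2 / t) + t := by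
    simp only [hF]
    rw [Real.log_div (by norm_num) ht0.ne']
  rw [← hFt]
  linarith

lemma rpow_tail_le_one :
    ∫⁻ l in Set.Ioi (0 : ℝ), ENNReal.ofReal (2 * ((1 + l) ^ 4)⁻¹) ≤ 1 := by
  have hmeasf : Measurable fun y : ℝ => ENNReal.ofReal (2 * ((y : ℝ) ^ 4)⁻¹) := by
    apply ENNReal.measurable_ofReal.comp
    exact ((measurable_id.pow_const 4).inv).const_mul 2
  have hmap : volume.restrict (Set.Ioi (1 : ℝ))
      = Measure.map (fun x : ℝ => x + 1) (volume.restrict (Set.Ioi (0 : ℝ))) := by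
    have h1 : (fun x : ℝ => x + 1) ⁻¹' Set.Ioi (1 : ℝ) = Set.Ioi 0 := by
      ext z; simp [Set.mem_Ioi]
    rw [← map_add_right_eq_self volume 1, Measure.restrict_map (measurable_add_const 1)
      measurableSet_Ioi, h1, map_add_right_eq_self volume 1]
  have hchg : ∫⁻ y in Set.Ioi (1 : ℝ), ENNReal.ofReal (2 * ((y ^ 4)⁻¹))
      = ∫⁻ l in Set.Ioi (0 : ℝ), ENNReal.ofReal (2 * (((1 + l) ^ 4)⁻¹)) := by
    rw [hmap, lintegral_map hmeasf (measurable_add_const 1)]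
    congr 1
    ext l
    rw [add_comm]
  rw [← hchg]
  have hrw : ∀ y : ℝ, y ∈ Set.Ioi (1:ℝ) → 2 * ((y ^ 4)⁻¹) = 2 * y ^ (-4 : ℝ) := by
    intro y hy
    have hy0 : (0:ℝ) ≤ y := le_of_lt (lt_trans one_pos hy)
    rw [Real.rpow_neg hy0]
    norm_num
  have hbase : IntegrableOn (fun y : ℝ => 2 * y ^ (-4 : ℝ)) (Set.Ioi (1 : ℝ)) :=
    (integrableOn_Ioi_rpow_of_lt (by norm_num : (-4:ℝ) < -1) one_pos).const_mul 2
  have hint : IntegrableOn (fun y : ℝ => 2 * ((y ^ 4)⁻¹)) (Set.Ioi (1 : ℝ)) :=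
    hbase.congr_fun (fun y hy => (hrw y hy).symm) measurableSet_Ioi
  have hnn : 0 ≤ᵐ[volume.restrict (Set.Ioi (1:ℝ))] fun y : ℝ => 2 * ((y ^ 4)⁻¹) := by
    filter_upwards [self_mem_ae_restrict measurableSet_Ioi] with z hz
    have : (1:ℝ) < z := hz
    positivity
  rw [← ofReal_integral_eq_lintegral_ofReal hint hnn]
  have hval : ∫ y in Set.Ioi (1:ℝ), 2 * ((y ^ 4)⁻¹) = 2 / 3 := by
    rw [setIntegral_congr_fun measurableSet_Ioi (fun y hy => hrw y hy)]
    rw [integral_const_mul, integral_Ioi_rpow_of_lt (by norm_num : (-4:ℝ) < -1) one_pos]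
    norm_num
  rw [hval]
  exact ENNReal.ofReal_le_one.2 (by norm_num)

lemma phi_pos {t : ℝ} (ht : t ∈ Set.Ioc (0:ℝ) 1) : 0 < phi t := by
  have h2t : (1:ℝ) < 2 / t := by
    rw [lt_div_iff₀ ht.1]; nlinarith [ht.2]
  have : 0 < Real.logb 2 (2 / t) := Real.logb_pos (by norm_num) h2t
  exact mul_pos ht.1 (Real.sqrt_pos.2 this)

lemma rearr_bound_of_luxemburg {x : ℝ → ℝ} (hx : Measurable x) {u : ℝ} (hu : 0 < u)
    (hint : (∫⁻ t in Set.Icc (0:ℝ) 1, ENNReal.ofReal (Real.exp ((x t / u) ^ 2) - 1)) ≤ 1)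
    {s : ℝ} (hs : s ∈ Set.Ioc (0:ℝ) 1) :
    decRearr x s ≤ u * Real.sqrt (Real.log (1 + 1 / s)) := by
  set β := Real.sqrt (Real.log (1 + 1 / s)) with hβ
  have hs0 : 0 < s := hs.1
  have hlog : 0 ≤ Real.log (1 + 1 / s) := Real.log_nonneg (by
    have : 0 < 1 / s := by positivity
    linarith)
  have hβ0 : 0 ≤ β := Real.sqrt_nonneg _
  have hβsq : β ^ 2 = Real.log (1 + 1 / s) := Real.sq_sqrt hlog
  set g : ℝ → ℝ≥0∞ := fun a => ENNReal.ofReal (Real.exp ((x a / u) ^ 2) - 1) with hg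
  have hgmeas : Measurable g :=
    ENNReal.measurable_ofReal.comp
      ((Real.measurable_exp.comp ((hx.div_const u).pow_const 2)).sub measurable_const)
  set τ := u * β with hτ
  have hcheb := mul_meas_ge_le_lintegral₀ (μ := unitMeasure) hgmeas.aemeasurable
    (ENNReal.ofReal (1 / s))
  have hsub : {z : ℝ | τ < |x z|} ⊆ {z : ℝ | ENNReal.ofReal (1 / s) ≤ g z} := by
    intro z hz
    simp only [Set.mem_setOf_eq] at hz ⊢
    apply ENNReal.ofReal_le_ofReal
    have h1 : β ^ 2 ≤ (x z / u) ^ 2 := by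
      rw [div_pow]
      rw [le_div_iff₀ (by positivity)]
      have : τ ^ 2 ≤ (x z) ^ 2 := by
        have h2 : τ ≤ |x z| := hz.le
        have h3 : 0 ≤ τ := by positivity
        calc τ ^ 2 ≤ |x z| ^ 2 := by nlinarith
          _ = (x z) ^ 2 := sq_abs _
      calc β ^ 2 * u ^ 2 = τ ^ 2 := by rw [hτ]; ring
        _ ≤ (x z) ^ 2 := this
    have := Real.exp_le_exp.2 (le_trans (le_of_eq hβsq.symm) h1)
    rw [Real.exp_log (by positivity)] at this
    linarith
  have hle : ENNReal.ofReal (1 / s) * unitMeasure {z | τ < |x z|} ≤ 1 := by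
    calc ENNReal.ofReal (1 / s) * unitMeasure {z | τ < |x z|}
        ≤ ENNReal.ofReal (1 / s) * unitMeasure {z | ENNReal.ofReal (1 / s) ≤ g z} :=
          mul_le_mul_right (measure_mono hsub) _
      _ ≤ ∫⁻ a, g a ∂unitMeasure := hcheb
      _ ≤ 1 := hint
  have hinv : ENNReal.ofReal (1 / s) = (ENNReal.ofReal s)⁻¹ := by
    rw [one_div, ENNReal.ofReal_inv_of_pos hs0]
  rw [hinv] at hle
  have hμ : unitMeasure {z | τ < |x z|} ≤ ENNReal.ofReal s := by
    have h2 := mul_le_mul_right hle (ENNReal.ofReal s)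
    rw [← mul_assoc, ENNReal.mul_inv_cancel (by simp [ENNReal.ofReal_eq_zero]; linarith)
      ENNReal.ofReal_ne_top, one_mul, mul_one] at h2
    exact h2
  exact csInf_le ⟨0, fun a ha => ha.1⟩ ⟨by positivity, hμ⟩

lemma marcinkiewicz_le_of_luxemburg {x : ℝ → ℝ} (hx : Measurable x) {u : ℝ} (hu : 0 < u)
    (hint : (∫⁻ t in Set.Icc (0:ℝ) 1, ENNReal.ofReal (Real.exp ((x t / u) ^ 2) - 1)) ≤ 1) :
    marcinkiewiczNorm x
      ≤ ENNReal.ofReal (((1 + 1 / Real.log 2) * Real.sqrt (Real.log 2)) * u) := by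
  set K := (1 + 1 / Real.log 2) * Real.sqrt (Real.log 2) with hK
  have hlog2 : 0 < Real.log 2 := Real.log_pos (by norm_num)
  rw [marcinkiewiczNorm]
  apply iSup₂_le
  intro t ht
  set A := Real.sqrt (Real.log (2 / t)) with hA
  have ht0 : 0 < t := ht.1
  have ht1 : t ≤ 1 := ht.2
  have hlog2t : Real.log 2 ≤ Real.log (2 / t) := by
    apply Real.log_le_log (by norm_num)
    rw [le_div_iff₀ ht0]; nlinarith
  have hA0 : 0 < A := Real.sqrt_pos.2 (lt_of_lt_of_le hlog2 hlog2t)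
  have hAsq : A ^ 2 = Real.log (2 / t) := Real.sq_sqrt (le_of_lt (lt_of_lt_of_le hlog2 hlog2t))
  -- pointwise bound on (0, t]
  have hpt : ∀ s ∈ Set.Ioc (0:ℝ) t, ENNReal.ofReal (decRearr x s)
      ≤ ENNReal.ofReal (u / A) * ENNReal.ofReal (Real.log (2 / s)) := by
    intro s hst
    have hs : s ∈ Set.Ioc (0:ℝ) 1 := ⟨hst.1, le_trans hst.2 ht1⟩
    have h1 : decRearr x s ≤ u * Real.sqrt (Real.log (1 + 1 / s)) :=
      rearr_bound_of_luxemburg hx hu hint hs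
    have hlogs : 0 < Real.log (2 / s) := by
      apply Real.log_pos
      rw [lt_div_iff₀ hs.1]; nlinarith [hs.2]
    have h2 : Real.sqrt (Real.log (1 + 1 / s)) ≤ Real.log (2 / s) / A := by
      have ha : Real.log (1 + 1 / s) ≤ Real.log (2 / s) := by
        have hs0' : 0 < s := hs.1
        apply Real.log_le_log (by positivity)
        have hrw1 : 1 + 1 / s = (s + 1) / s := by field_simp
        rw [hrw1]
        gcongr
        nlinarith [hs.2]
      have hb : Real.sqrt (Real.log (1 + 1 / s)) ≤ Real.sqrt (Real.log (2 / s)) :=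
        Real.sqrt_le_sqrt ha
      have hc : A ≤ Real.sqrt (Real.log (2 / s)) := by
        apply Real.sqrt_le_sqrt
        apply Real.log_le_log (by positivity)
        exact div_le_div_of_nonneg_left (by norm_num) hst.1 hst.2
      calc Real.sqrt (Real.log (1 + 1 / s)) ≤ Real.sqrt (Real.log (2 / s)) := hb
        _ = Real.log (2 / s) / Real.sqrt (Real.log (2 / s)) := (Real.div_sqrt).symm
        _ ≤ Real.log (2 / s) / A := div_le_div_of_nonneg_left hlogs.le hA0 hc
    calc ENNReal.ofReal (decRearr x s) ≤ ENNReal.ofReal (u * (Real.log (2 / s) / A)) :=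
          ENNReal.ofReal_le_ofReal (le_trans h1 (by
            apply mul_le_mul_of_nonneg_left h2 hu.le))
      _ = ENNReal.ofReal ((u / A) * Real.log (2 / s)) := by ring_nf
      _ = ENNReal.ofReal (u / A) * ENNReal.ofReal (Real.log (2 / s)) :=
          ENNReal.ofReal_mul (by positivity)
  have hI : (∫⁻ s in Set.Ioc (0:ℝ) t, ENNReal.ofReal (decRearr x s))
      ≤ ENNReal.ofReal (phi t) * ENNReal.ofReal (K * u) := by
    calc (∫⁻ s in Set.Ioc (0:ℝ) t, ENNReal.ofReal (decRearr x s))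
        ≤ ∫⁻ s in Set.Ioc (0:ℝ) t,
            ENNReal.ofReal (u / A) * ENNReal.ofReal (Real.log (2 / s)) :=
          setLIntegral_mono' measurableSet_Ioc hpt
      _ = ENNReal.ofReal (u / A) * ∫⁻ s in Set.Ioc (0:ℝ) t,
            ENNReal.ofReal (Real.log (2 / s)) :=
          lintegral_const_mul' _ _ ENNReal.ofReal_ne_top
      _ ≤ ENNReal.ofReal (u / A) * ENNReal.ofReal (t * Real.log (2 / t) + t) :=
          mul_le_mul_right (log_lintegral_bound ht0 ht1) _
      _ = ENNReal.ofReal ((u / A) * (t * Real.log (2 / t) + t)) :=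
          (ENNReal.ofReal_mul (by positivity)).symm
      _ ≤ ENNReal.ofReal (phi t) * ENNReal.ofReal (K * u) := by
          rw [← ENNReal.ofReal_mul (le_of_lt (phi_pos ht))]
          apply ENNReal.ofReal_le_ofReal
          have hphi : phi t = t * A / Real.sqrt (Real.log 2) := by
            rw [phi]
            unfold Real.logb
            rw [Real.sqrt_div (le_of_lt (lt_of_lt_of_le hlog2 hlog2t))]
            ring
          have hsl2 : 0 < Real.sqrt (Real.log 2) := Real.sqrt_pos.2 hlog2
          rw [hphi, hK]
          have key : (u / A) * (t * Real.log (2 / t) + t) ≤ (1 + 1 / Real.log 2) * u * (t * A) := by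
            rw [← hAsq]
            have h1A : 1 / A ≤ A / Real.log 2 := by
              rw [div_le_div_iff₀ hA0 hlog2]
              nlinarith [hAsq, hlog2t]
            have expand : (u / A) * (t * A ^ 2 + t) = u * t * A + u * t * (1 / A) := by
              field_simp
            rw [expand]
            have hthis : u * t * (1 / A) ≤ u * t * (A / Real.log 2) := by
              apply mul_le_mul_of_nonneg_left h1A (by positivity)
            have hrhs : (1 + 1 / Real.log 2) * u * (t * A)
                = u * t * A + u * t * (A / Real.log 2) := by ring
            rw [hrhs]
            linarith
          calc (u / A) * (t * Real.log (2 / t) + t) ≤ (1 + 1 / Real.log 2) * u * (t * A) := key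
            _ = t * A / Real.sqrt (Real.log 2) * ((1 + 1 / Real.log 2) * Real.sqrt (Real.log 2) * u) := by
                field_simp
  calc (ENNReal.ofReal (phi t))⁻¹ * ∫⁻ s in Set.Ioc (0:ℝ) t, ENNReal.ofReal (decRearr x s)
      ≤ (ENNReal.ofReal (phi t))⁻¹ * (ENNReal.ofReal (phi t) * ENNReal.ofReal (K * u)) :=
        mul_le_mul_right hI _
    _ = ENNReal.ofReal (K * u) := by
        rw [← mul_assoc, ENNReal.inv_mul_cancel (by
          simp only [ne_eq, ENNReal.ofReal_eq_zero, not_le]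
          exact phi_pos ht) ENNReal.ofReal_ne_top, one_mul]

lemma rearr_bound_of_marc {x : ℝ → ℝ} (hx : Measurable x) {m : ℝ} (hm : 0 < m)
    (hM : marcinkiewiczNorm x ≤ ENNReal.ofReal m) {t : ℝ} (ht : t ∈ Set.Ioc (0:ℝ) 1) :
    decRearr x t ≤ m * Real.sqrt (Real.logb 2 (2 / t)) := by
  set I := ∫⁻ s in Set.Ioc (0:ℝ) t, ENNReal.ofReal (decRearr x s) with hI
  have ht0 : 0 < t := ht.1
  have h1 : ENNReal.ofReal (decRearr x t) * ENNReal.ofReal t ≤ I := by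
    calc ENNReal.ofReal (decRearr x t) * ENNReal.ofReal t
        = ∫⁻ _ in Set.Ioc (0:ℝ) t, ENNReal.ofReal (decRearr x t) := by
          rw [setLIntegral_const, Real.volume_Ioc, sub_zero]
      _ ≤ I := setLIntegral_mono' measurableSet_Ioc fun s hs =>
          ENNReal.ofReal_le_ofReal (decRearr_antitone hx hs.1 hs.2)
  have h2 : (ENNReal.ofReal (phi t))⁻¹ * I ≤ ENNReal.ofReal m :=
    le_trans (le_iSup₂_of_le t ht le_rfl) hM
  have hphi0 : ENNReal.ofReal (phi t) ≠ 0 := by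
    simp only [ne_eq, ENNReal.ofReal_eq_zero, not_le]
    exact phi_pos ht
  have h3 : I ≤ ENNReal.ofReal (phi t) * ENNReal.ofReal m := by
    calc I = ENNReal.ofReal (phi t) * ((ENNReal.ofReal (phi t))⁻¹ * I) := by
          rw [← mul_assoc, ENNReal.mul_inv_cancel hphi0 ENNReal.ofReal_ne_top, one_mul]
      _ ≤ ENNReal.ofReal (phi t) * ENNReal.ofReal m := mul_le_mul_right h2 _
  have h4 : ENNReal.ofReal (decRearr x t * t) ≤ ENNReal.ofReal (m * phi t) := by
    rw [ENNReal.ofReal_mul (decRearr_nonneg x t), ENNReal.ofReal_mul hm.le]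
    exact le_trans h1 (le_trans h3 (by rw [mul_comm]))
  have h5 : decRearr x t * t ≤ m * phi t :=
    (ENNReal.ofReal_le_ofReal_iff (by nlinarith [phi_pos ht])).1 h4
  have h6 : m * phi t = m * Real.sqrt (Real.logb 2 (2 / t)) * t := by
    rw [phi]; ring
  rw [h6] at h5
  exact le_of_mul_le_mul_right h5 ht0

lemma dist_bound_of_rearr {x : ℝ → ℝ} (hx : Measurable x) {m : ℝ} (hm : 0 < m)
    (hr : ∀ t ∈ Set.Ioc (0:ℝ) 1, decRearr x t ≤ m * Real.sqrt (Real.logb 2 (2 / t)))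
    {τ : ℝ} (hτ : 0 < τ) :
    unitMeasure {z | τ < |x z|}
      ≤ ENNReal.ofReal (2 * Real.exp (-(τ / m) ^ 2 * Real.log 2)) := by
  set r := 2 * Real.exp (-(τ / m) ^ 2 * Real.log 2) with hr'
  have hr0 : 0 < r := by positivity
  rcases le_or_gt 1 r with h1r | hr1
  · exact le_trans (unitMeasure_le_one _) (ENNReal.one_le_ofReal.2 h1r)
  · apply ENNReal.le_of_forall_pos_le_add
    intro ε hε _
    set δ := (ε : ℝ) with hδ
    have hδ0 : 0 < δ := hε
    set t := min (r + δ) 1 with htdef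
    have ht0 : 0 < t := lt_min (by linarith) one_pos
    have ht1 : t ≤ 1 := min_le_right _ _
    have htr : r < t := lt_min (by linarith) hr1
    have hstrict : m * Real.sqrt (Real.logb 2 (2 / t)) < τ := by
      have hlogb : Real.logb 2 (2 / t) < (τ / m) ^ 2 := by
        rw [Real.logb, div_lt_iff₀ (Real.log_pos (by norm_num))]
        have h2t : (0:ℝ) < 2 / t := by positivity
        rw [Real.log_lt_iff_lt_exp h2t]
        rw [div_lt_iff₀ ht0, mul_comm]
        have hexp : Real.exp ((τ / m) ^ 2 * Real.log 2)
            = (Real.exp (-(τ / m) ^ 2 * Real.log 2))⁻¹ := by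
          rw [← Real.exp_neg]; ring_nf
        calc (2:ℝ) = r * (Real.exp (-(τ / m) ^ 2 * Real.log 2))⁻¹ := by
              rw [hr']
              field_simp
          _ < t * (Real.exp (-(τ / m) ^ 2 * Real.log 2))⁻¹ := by
              apply mul_lt_mul_of_pos_right htr (by positivity)
          _ = t * Real.exp ((τ / m) ^ 2 * Real.log 2) := by rw [hexp]
      have hnn : 0 ≤ Real.logb 2 (2 / t) := by
        apply Real.logb_nonneg (by norm_num)
        rw [le_div_iff₀ ht0]; linarith
      have := Real.sqrt_lt' (y := τ / m) (by positivity) |>.2 hlogb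
      calc m * Real.sqrt (Real.logb 2 (2 / t)) < m * (τ / m) :=
            mul_lt_mul_of_pos_left this hm
        _ = τ := by field_simp
    have hμ : unitMeasure {z | τ < |x z|} ≤ ENNReal.ofReal t :=
      meas_le_of_decRearr_lt hx ht0 (lt_of_le_of_lt (hr t ⟨ht0, ht1⟩) hstrict)
    calc unitMeasure {z | τ < |x z|} ≤ ENNReal.ofReal t := hμ
      _ ≤ ENNReal.ofReal (r + δ) := ENNReal.ofReal_le_ofReal (min_le_left _ _)
      _ = ENNReal.ofReal r + ENNReal.ofReal δ := ENNReal.ofReal_add hr0.le hδ0.le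
      _ = ENNReal.ofReal r + ε := by rw [hδ, ENNReal.ofReal_coe_nnreal]

lemma luxemburg_le_of_rearr {x : ℝ → ℝ} (hx : Measurable x) {m : ℝ} (hm : 0 < m)
    (hr : ∀ t ∈ Set.Ioc (0:ℝ) 1, decRearr x t ≤ m * Real.sqrt (Real.logb 2 (2 / t))) :
    luxemburgN x ≤ ENNReal.ofReal (2 / Real.sqrt (Real.log 2) * m) := by
  have hlog2 : 0 < Real.log 2 := Real.log_pos (by norm_num)
  have hsl2 : 0 < Real.sqrt (Real.log 2) := Real.sqrt_pos.2 hlog2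
  set u := 2 / Real.sqrt (Real.log 2) * m with hu'
  have hu : 0 < u := by positivity
  have husq : (u / m) ^ 2 = 4 / Real.log 2 := by
    rw [hu']
    have h1 : 2 / Real.sqrt (Real.log 2) * m / m = 2 / Real.sqrt (Real.log 2) := by
      field_simp
    rw [h1, div_pow, Real.sq_sqrt hlog2.le]
    norm_num
  have hf_nn : 0 ≤ᵐ[unitMeasure] fun a : ℝ => Real.exp ((x a / u) ^ 2) - 1 := by
    refine ae_of_all _ fun a => ?_
    have h1 : (1:ℝ) ≤ Real.exp ((x a / u) ^ 2) := Real.one_le_exp (by positivity)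
    show (0:ℝ) ≤ Real.exp ((x a / u) ^ 2) - 1
    linarith
  have hf_m : AEMeasurable (fun a : ℝ => Real.exp ((x a / u) ^ 2) - 1) unitMeasure :=
    ((Real.measurable_exp.comp ((hx.div_const u).pow_const 2)).sub measurable_const).aemeasurable
  have hint : (∫⁻ t in Set.Icc (0:ℝ) 1,
      ENNReal.ofReal (Real.exp ((x t / u) ^ 2) - 1)) ≤ 1 := by
    have hlc := lintegral_eq_lintegral_meas_lt unitMeasure hf_nn hf_m
    show (∫⁻ a, ENNReal.ofReal (Real.exp ((x a / u) ^ 2) - 1) ∂unitMeasure) ≤ 1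
    rw [hlc]
    calc ∫⁻ l in Set.Ioi (0:ℝ), unitMeasure {a | l < Real.exp ((x a / u) ^ 2) - 1}
        ≤ ∫⁻ l in Set.Ioi (0:ℝ), ENNReal.ofReal (2 * ((1 + l) ^ 4)⁻¹) := by
          apply setLIntegral_mono' measurableSet_Ioi
          intro l hl
          have hl0 : 0 < l := hl
          have hL0 : 0 < Real.log (1 + l) := Real.log_pos (by linarith)
          have hseteq : {a : ℝ | l < Real.exp ((x a / u) ^ 2) - 1}
              = {a : ℝ | u * Real.sqrt (Real.log (1 + l)) < |x a|} := by
            ext a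
            simp only [Set.mem_setOf_eq]
            constructor
            · intro h
              have h2 : Real.log (1 + l) < (x a / u) ^ 2 := by
                rw [Real.log_lt_iff_lt_exp (by linarith)]
                linarith
              have hxa : x a ≠ 0 := by
                intro h0
                rw [h0] at h2
                simp at h2
                linarith
              have h3 : Real.sqrt (Real.log (1 + l)) < |x a| / u := by
                apply (Real.sqrt_lt' (by positivity : 0 < |x a| / u)).2
                calc Real.log (1 + l) < (x a / u) ^ 2 := h2
                  _ = (|x a| / u) ^ 2 := by rw [div_pow, div_pow, sq_abs]
              calc u * Real.sqrt (Real.log (1 + l)) < u * (|x a| / u) :=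
                    mul_lt_mul_of_pos_left h3 hu
                _ = |x a| := by field_simp
            · intro h
              have h2 : Real.sqrt (Real.log (1 + l)) < |x a| / u := by
                rw [lt_div_iff₀ hu, mul_comm]
                exact h
              have h3 : Real.log (1 + l) < (x a / u) ^ 2 := by
                have h4 := (Real.sqrt_lt' (by
                  have := lt_of_le_of_lt (Real.sqrt_nonneg _) h2
                  positivity : 0 < |x a| / u)).1 h2
                calc Real.log (1 + l) < (|x a| / u) ^ 2 := h4
                  _ = (x a / u) ^ 2 := by rw [div_pow, div_pow, sq_abs]
              rw [Real.log_lt_iff_lt_exp (by linarith)] at h3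
              linarith
          rw [hseteq]
          have hτ : 0 < u * Real.sqrt (Real.log (1 + l)) :=
            mul_pos hu (Real.sqrt_pos.2 hL0)
          have hd := dist_bound_of_rearr hx hm hr hτ
          apply le_trans hd
          apply le_of_eq
          congr 1
          have harg : (u * Real.sqrt (Real.log (1 + l)) / m) ^ 2
              = 4 / Real.log 2 * Real.log (1 + l) := by
            rw [div_pow, mul_pow, Real.sq_sqrt hL0.le, ← husq, div_pow]
            ring
          rw [harg]
          have hexp : Real.exp (-(4 / Real.log 2 * Real.log (1 + l)) * Real.log 2)
              = ((1 + l) ^ 4)⁻¹ := by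
            have h4 : -(4 / Real.log 2 * Real.log (1 + l)) * Real.log 2
                = -(4 * Real.log (1 + l)) := by field_simp
            rw [h4, Real.exp_neg]
            congr 1
            rw [show (4:ℝ) * Real.log (1 + l) = (4:ℕ) * Real.log (1 + l) by norm_num,
              Real.exp_nat_mul, Real.exp_log (by linarith)]
          rw [hexp]
      _ ≤ 1 := rpow_tail_le_one
  calc luxemburgN x ≤ ENNReal.ofReal u := iInf₂_le u ⟨hu, hint⟩
    _ = ENNReal.ofReal (2 / Real.sqrt (Real.log 2) * m) := rfl

/-- The Orlicz space `L_N`, `N(u) = exp(u²) - 1`, coincides with the Marcinkiewicz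
space `M(φ)`, `φ(t) = t log₂^{1/2}(2/t)`, with equivalent norms. -/
theorem orlicz_eq_marcinkiewicz :
    ∃ c C : ℝ, 0 < c ∧ 0 < C ∧
      ∀ x : ℝ → ℝ, Measurable x →
        ENNReal.ofReal c * marcinkiewiczNorm x ≤ luxemburgN x ∧
          luxemburgN x ≤ ENNReal.ofReal C * marcinkiewiczNorm x := by
  have hlog2 : 0 < Real.log 2 := Real.log_pos (by norm_num)
  have hsl2 : 0 < Real.sqrt (Real.log 2) := Real.sqrt_pos.2 hlog2
  set K := (1 + 1 / Real.log 2) * Real.sqrt (Real.log 2) with hK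
  have hK0 : 0 < K := by positivity
  refine ⟨1 / K, 2 / Real.sqrt (Real.log 2), by positivity, by positivity, ?_⟩
  intro x hx
  constructor
  · rw [luxemburgN]
    apply le_iInf₂
    intro u hu'
    obtain ⟨hu, hint⟩ := hu'
    have h := marcinkiewicz_le_of_luxemburg hx hu hint
    calc ENNReal.ofReal (1 / K) * marcinkiewiczNorm x
        ≤ ENNReal.ofReal (1 / K) * ENNReal.ofReal (K * u) := mul_le_mul_right h _
      _ = ENNReal.ofReal ((1 / K) * (K * u)) := (ENNReal.ofReal_mul (by positivity)).symm
      _ = ENNReal.ofReal u := by congr 1; field_simp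
  · rcases eq_or_ne (marcinkiewiczNorm x) ⊤ with hM | hM
    · rw [hM, ENNReal.mul_top (by
        simp only [ne_eq, ENNReal.ofReal_eq_zero, not_le]
        positivity)]
      exact le_top
    · apply ENNReal.le_of_forall_pos_le_add
      intro ε hε _
      set C := 2 / Real.sqrt (Real.log 2) with hC
      have hC0 : 0 < C := by positivity
      set δ := min 1 ((ε : ℝ) / C) with hδ
      have hδ0 : 0 < δ := lt_min one_pos (by positivity)
      set m := (marcinkiewiczNorm x).toReal + δ with hm'
      have htr0 : 0 ≤ (marcinkiewiczNorm x).toReal := ENNReal.toReal_nonneg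
      have hm : 0 < m := by rw [hm']; linarith
      have hMle : marcinkiewiczNorm x ≤ ENNReal.ofReal m := by
        rw [← ENNReal.ofReal_toReal hM]
        exact ENNReal.ofReal_le_ofReal (by rw [hm']; linarith)
      have hr : ∀ t ∈ Set.Ioc (0:ℝ) 1, decRearr x t ≤ m * Real.sqrt (Real.logb 2 (2 / t)) :=
        fun t ht => rearr_bound_of_marc hx hm hMle ht
      have hlux := luxemburg_le_of_rearr hx hm hr
      calc luxemburgN x ≤ ENNReal.ofReal (C * m) := hlux
        _ = ENNReal.ofReal (C * (marcinkiewiczNorm x).toReal) + ENNReal.ofReal (C * δ) := by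
            rw [← ENNReal.ofReal_add (by positivity) (by positivity)]
            congr 1
            rw [hm']
            ring
        _ ≤ ENNReal.ofReal C * marcinkiewiczNorm x + ε := by
            apply add_le_add
            · rw [ENNReal.ofReal_mul hC0.le, ENNReal.ofReal_toReal hM]
            · calc ENNReal.ofReal (C * δ) ≤ ENNReal.ofReal (C * ((ε : ℝ) / C)) :=
                    ENNReal.ofReal_le_ofReal
                      (mul_le_mul_of_nonneg_left (min_le_right _ _) hC0.le)
                _ = ENNReal.ofReal (ε : ℝ) := by congr 1; field_simp
                _ = ε := ENNReal.ofReal_coe_nnreal
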